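/- Assume additionally that every P_j is traceless: Tr(P_j) = 0. Define the reverse-order measurement operator Π̃(m) := Π_1(m_1) Π_2(m_2) ⋯ Π_τ(m_τ) and Prob̃(m, m̄) := (1/d) Tr[Π̃(m)ᴴ Π̃(m̄) Π̃(m̄)ᴴ Π̃(m)]. Then for every s ∈ {+1, −1}^τ, ∑_{m ∈ {+1, −1}^τ} Prob̃(m, m·s) = 1/|Ê_rev| if s ∈ Ê_rev, and = 0 if s ∉ Ê_rev. In particular, in the system–reference distillation algorithm the sum outcome s = m·m̄ can occur with nonzero probability if and only if s ∈ Ê_rev. -/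

import Mathlib

noncomputable section
open Matrix

/-- A sign `±1`, modelled as a unit of `ℤ`, coerced into `ℂ`. -/
def signC (u : ℤˣ) : ℂ := ((u : ℤ) : ℂ)

/-- Measurement projector `Π_j(m_j) = (1 + m_j P_j)/2`. -/
def proj {d : ℕ} (A : Matrix (Fin d) (Fin d) ℂ) (u : ℤˣ) : Matrix (Fin d) (Fin d) ℂ :=
  (2⁻¹ : ℂ) • (1 + signC u • A)

/-- Chronologically ordered product of measurement projectors
`Π(m) = Π_t(m_t) ⋯ Π_1(m_1)` (0-indexed, latest measurement leftmost):
`PiOp P m t` is the product for the measurements `0, …, t`. -/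
def PiOp {d : ℕ} (P : ℕ → Matrix (Fin d) (Fin d) ℂ) (m : ℕ → ℤˣ) :
    ℕ → Matrix (Fin d) (Fin d) ℂ
  | 0 => proj (P 0) (m 0)
  | (t+1) => proj (P (t+1)) (m (t+1)) * PiOp P m t

/-- Extend a sign vector on `Fin τ` to all of `ℕ` by `+1`. -/
def extSign (τ : ℕ) (m : Fin τ → ℤˣ) : ℕ → ℤˣ :=
  fun j => if h : j < τ then m ⟨j, h⟩ else 1
open scoped Classical

/-- Reverse-order product of measurement projectors
`Π̃(m) = Π_1(m_1) Π_2(m_2) ⋯ Π_t(m_t)` (0-indexed, earliest measurement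
leftmost): `PiOpRev P m t` is the product for the measurements `0, …, t`. -/
def PiOpRev {d : ℕ} (P : ℕ → Matrix (Fin d) (Fin d) ℂ) (m : ℕ → ℤˣ) :
    ℕ → Matrix (Fin d) (Fin d) ℂ
  | 0 => proj (P 0) (m 0)
  | (t+1) => PiOpRev P m t * proj (P (t+1)) (m (t+1))

/-- `Prob̃(m, m̄) = (1/d) Tr[Π̃(m)ᴴ Π̃(m̄) Π̃(m̄)ᴴ Π̃(m)]` for the reverse-order
measurement operators. -/
def ProbRev (d τ : ℕ) (P : ℕ → Matrix (Fin d) (Fin d) ℂ) (m mb : Fin τ → ℤˣ) : ℂ :=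
  (d : ℂ)⁻¹ * Matrix.trace
    ((PiOpRev P (extSign τ m) (τ - 1))ᴴ * PiOpRev P (extSign τ mb) (τ - 1) *
      (PiOpRev P (extSign τ mb) (τ - 1))ᴴ * PiOpRev P (extSign τ m) (τ - 1))

/-- The reverse multiplicative error vector `ê^rev_i ∈ {±1}^τ`:
`ê^rev_i(j) = ε(i,j)` for `j ≥ i` and `+1` for `j < i`. -/
def ehatRev {τ : ℕ} (ε : ℕ → ℕ → ℤˣ) (i : Fin τ) : Fin τ → ℤˣ :=
  fun j => if (i : ℕ) ≤ (j : ℕ) then ε (i : ℕ) (j : ℕ) else 1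

/-- The reverse multiplicative error group `Ê_rev ≤ ({±1}^τ, ·)` generated by
the reverse error vectors `ê^rev_1, …, ê^rev_τ`. -/
def EhatRev (τ : ℕ) (ε : ℕ → ℕ → ℤˣ) : Subgroup (Fin τ → ℤˣ) :=
  Subgroup.closure (Set.range (ehatRev ε))

namespace Stmt5
open Finset
open scoped symmDiff

lemma signC_one : signC 1 = 1 := by simp [signC]
lemma signC_neg_one : signC (-1) = -1 := by simp [signC]
lemma signC_mul (u v : ℤˣ) : signC (u * v) = signC u * signC v := by
  simp [signC, Units.val_mul]
lemma star_signC (u : ℤˣ) : star (signC u) = signC u := by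
  rcases Int.units_eq_one_or u with h | h <;> simp [h, signC]
lemma signC_eq_one_iff {u : ℤˣ} : signC u = 1 ↔ u = 1 := by
  rcases Int.units_eq_one_or u with h | h <;> simp [h, signC] <;> norm_num
lemma signC_eq_neg_one_iff {u : ℤˣ} : signC u = -1 ↔ u = -1 := by
  rcases Int.units_eq_one_or u with h | h <;> simp [h, signC] <;> norm_num
lemma signC_cases (u : ℤˣ) : signC u = 1 ∨ signC u = -1 := by
  rcases Int.units_eq_one_or u with h | h <;> simp [h, signC]

/-- `signC` as a monoid hom. -/
def signHom : ℤˣ →* ℂ where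
  toFun := signC
  map_one' := signC_one
  map_mul' := signC_mul

lemma signC_prod (S : Finset ℕ) (f : ℕ → ℤˣ) :
    signC (∏ j ∈ S, f j) = ∏ j ∈ S, signC (f j) := map_prod signHom f S

/-- product over a symmetric difference of `ℤˣ`-valued functions. -/
lemma prod_symmDiff_units (X Y : Finset ℕ) (f : ℕ → ℤˣ) :
    (∏ i ∈ X ∆ Y, f i) = (∏ i ∈ X, f i) * ∏ i ∈ Y, f i := by
  classical
  have hsq : (∏ i ∈ X ∩ Y, f i) * (∏ i ∈ X ∩ Y, f i) = 1 := by
    rw [← Finset.prod_mul_distrib]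
    exact Finset.prod_eq_one fun i _ => Int.units_mul_self _
  have hd : Disjoint (X ∆ Y) (X ∩ Y) := disjoint_symmDiff_inf X Y
  have hu : (X ∆ Y) ∪ (X ∩ Y) = X ∪ Y := symmDiff_sup_inf X Y
  calc (∏ i ∈ X ∆ Y, f i)
      = (∏ i ∈ X ∆ Y, f i) * ((∏ i ∈ X ∩ Y, f i) * ∏ i ∈ X ∩ Y, f i) := by rw [hsq, mul_one]
    _ = ((∏ i ∈ (X ∆ Y) ∪ (X ∩ Y), f i)) * ∏ i ∈ X ∩ Y, f i := by
        rw [← mul_assoc, ← Finset.prod_union hd]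
    _ = (∏ i ∈ X ∪ Y, f i) * ∏ i ∈ X ∩ Y, f i := by rw [hu]
    _ = _ := Finset.prod_union_inter

lemma symmDiff_subset {X Y N : Finset ℕ} (hX : X ⊆ N) (hY : Y ⊆ N) : X ∆ Y ⊆ N := by
  intro i hi
  rcases Finset.mem_symmDiff.mp hi with ⟨h, _⟩ | ⟨h, _⟩
  · exact hX h
  · exact hY h

section qu
variable (ε : ℕ → ℕ → ℤˣ)

/-- The sign picked up when commuting the word indexed by `T` past the word indexed by `S`. -/
def qu (T S : Finset ℕ) : ℤˣ := ∏ i ∈ T, ∏ j ∈ S, if i < j then ε i j else 1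

lemma qu_empty_left (S : Finset ℕ) : qu ε ∅ S = 1 := rfl

lemma qu_symmDiff_left (X Y S : Finset ℕ) :
    qu ε (X ∆ Y) S = qu ε X S * qu ε Y S := prod_symmDiff_units X Y _

lemma qu_comm_form (T S : Finset ℕ) :
    qu ε T S = ∏ j ∈ S, ∏ i ∈ T, if i < j then ε i j else 1 := Finset.prod_comm

lemma qu_symmDiff_right (T X Y : Finset ℕ) :
    qu ε T (X ∆ Y) = qu ε T X * qu ε T Y := by
  rw [qu_comm_form, qu_comm_form, qu_comm_form]
  exact prod_symmDiff_units X Y _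

lemma qu_insert_left {a : ℕ} {T : Finset ℕ} (ha : a ∉ T) (S : Finset ℕ) :
    qu ε (insert a T) S = (∏ j ∈ S, if a < j then ε a j else 1) * qu ε T S :=
  Finset.prod_insert ha

lemma qu_insert_right {a : ℕ} {S : Finset ℕ} (ha : a ∉ S) (T : Finset ℕ) :
    qu ε T (insert a S) = (∏ i ∈ T, if i < a then ε i a else 1) * qu ε T S := by
  rw [qu_comm_form, Finset.prod_insert ha, ← qu_comm_form]

end qu
end Stmt5
namespace Stmt5
open Finset
open scoped symmDiff

section words
variable {d : ℕ} (P : ℕ → Matrix (Fin d) (Fin d) ℂ)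

/-- The ordered Pauli word `∏_{j ∈ S, j ≤ t} P j` (ascending order of indices). -/
def WS (S : Finset ℕ) : ℕ → Matrix (Fin d) (Fin d) ℂ
  | 0 => if 0 ∈ S then P 0 else 1
  | (t+1) => WS S t * (if t+1 ∈ S then P (t+1) else 1)

lemma WS_congr {S S' : Finset ℕ} :
    ∀ t, (∀ j, j ≤ t → (j ∈ S ↔ j ∈ S')) → WS P S t = WS P S' t
  | 0, h => by
      have h0 := h 0 le_rfl
      by_cases h1 : 0 ∈ S <;> simp [WS, h1, h0.symm, h0.mp, (h0.not).mp] <;>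
        simp_all
  | (t+1), h => by
      have ht := h (t+1) le_rfl
      rw [WS, WS, WS_congr t (fun j hj => h j (le_trans hj (Nat.le_succ t)))]
      by_cases h1 : t+1 ∈ S
      · rw [if_pos h1, if_pos (ht.mp h1)]
      · rw [if_neg h1, if_neg (fun hc => h1 (ht.mpr hc))]

lemma WS_empty : ∀ t, WS P (∅ : Finset ℕ) t = 1
  | 0 => by simp [WS]
  | (t+1) => by simp [WS, WS_empty t]

lemma WS_erase_top {S : Finset ℕ} (t : ℕ) :
    WS P S (t) = WS P (S.erase (t+1)) t :=
  WS_congr P t (fun j hj => by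
    constructor
    · intro h; exact Finset.mem_erase.mpr ⟨by omega, h⟩
    · intro h; exact Finset.mem_of_mem_erase h)

lemma WS_succ_eq {S : Finset ℕ} (t : ℕ) :
    WS P S (t+1) = WS P (S.erase (t+1)) t * (if t+1 ∈ S then P (t+1) else 1) := by
  rw [WS, ← WS_erase_top]

variable (ε : ℕ → ℕ → ℤˣ)
variable (hinv : ∀ j, P j * P j = 1)
variable (hεsymm : ∀ i j, ε i j = ε j i)
variable (hcomm : ∀ i j, P i * P j = signC (ε i j) • (P j * P i))

section
include hcomm

lemma WS_comm : ∀ t, ∀ S : Finset ℕ, S ⊆ range (t+1) → ∀ k,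
    P k * WS P S t = (∏ i ∈ S, signC (ε k i)) • (WS P S t * P k)
  | 0, S, hS, k => by
      by_cases h0 : 0 ∈ S
      · have hSeq : S = {0} := by
          have := Finset.subset_singleton_iff.mp (by simpa [Finset.range_one] using hS)
          rcases this with h | h
          · exact absurd (h ▸ h0) (Finset.notMem_empty 0)
          · exact h
        subst hSeq
        simpa [WS] using hcomm k 0
      · have hSeq : S = ∅ := by
          have := Finset.subset_singleton_iff.mp (by simpa [Finset.range_one] using hS)
          rcases this with h | h
          · exact h
          · exact absurd (h.symm ▸ Finset.mem_singleton_self 0) h0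
        subst hSeq
        simp [WS]
  | (t+1), S, hS, k => by
      have hS' : S.erase (t+1) ⊆ range (t+1) := by
        intro j hj
        have hj1 := Finset.mem_range.mp (hS (Finset.mem_of_mem_erase hj))
        have hj2 := Finset.ne_of_mem_erase hj
        exact Finset.mem_range.mpr (by omega)
      rw [WS_succ_eq]
      by_cases h1 : t+1 ∈ S
      · rw [if_pos h1]
        have hstep : P k * (WS P (S.erase (t+1)) t * P (t+1))
            = ((∏ i ∈ S.erase (t+1), signC (ε k i)) * signC (ε k (t+1))) •
              (WS P (S.erase (t+1)) t * P (t+1) * P k) := by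
          rw [← mul_assoc, WS_comm t _ hS' k, smul_mul_assoc, mul_assoc,
            hcomm k (t+1), mul_smul_comm, smul_smul, mul_assoc]
        rw [hstep]
        congr 1
        conv_rhs => rw [← Finset.insert_erase h1]
        rw [Finset.prod_insert (Finset.notMem_erase (t+1) S), mul_comm]
      · rw [if_neg h1, mul_one]
        have heq : S.erase (t+1) = S := Finset.erase_eq_of_notMem h1
        rw [heq] at hS' ⊢
        exact WS_comm t S hS' k

end
end words
end Stmt5
namespace Stmt5
open Finset
open scoped symmDiff

section words2
variable {d : ℕ} (P : ℕ → Matrix (Fin d) (Fin d) ℂ) (ε : ℕ → ℕ → ℤˣ)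
variable (hherm : ∀ j, (P j)ᴴ = P j)
variable (hinv : ∀ j, P j * P j = 1)
variable (hεsymm : ∀ i j, ε i j = ε j i)
variable (hcomm : ∀ i j, P i * P j = signC (ε i j) • (P j * P i))

lemma erase_range_subset {S : Finset ℕ} {t : ℕ} (hS : S ⊆ range (t+2)) :
    S.erase (t+1) ⊆ range (t+1) := by
  intro j hj
  have h1 := Finset.mem_range.mp (hS (Finset.mem_of_mem_erase hj))
  have h2 := Finset.ne_of_mem_erase hj
  exact Finset.mem_range.mpr (by omega)

lemma prod_ite_lt_topu {S : Finset ℕ} {t : ℕ} (hS : S ⊆ range (t+2)) :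
    (∏ j ∈ S, if (t+1) < j then ε (t+1) j else 1) = 1 :=
  Finset.prod_eq_one fun j hj => by
    have := Finset.mem_range.mp (hS hj); rw [if_neg (by omega)]

lemma prod_ite_lt_topu' {T : Finset ℕ} {t : ℕ} (hT : T ⊆ range (t+1)) :
    (∏ i ∈ T, if i < (t+1) then ε i (t+1) else 1) = ∏ i ∈ T, ε i (t+1) :=
  Finset.prod_congr rfl fun i hi => by
    have := Finset.mem_range.mp (hT hi); rw [if_pos (by omega)]

include hεsymm in
/-- key sign bookkeeping identity for the inductive steps -/
lemma qu_step {S T : Finset ℕ} {t : ℕ}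
    (hS : S ⊆ range (t+2)) (hT : T ⊆ range (t+2)) :
    qu ε T S = qu ε (T.erase (t+1)) (S.erase (t+1)) *
      (if t+1 ∈ S then ∏ i ∈ T.erase (t+1), ε (t+1) i else 1) := by
  classical
  have hT' : T.erase (t+1) ⊆ range (t+1) := erase_range_subset hT
  have hsymmprod : (∏ i ∈ T.erase (t+1), ε i (t+1)) = ∏ i ∈ T.erase (t+1), ε (t+1) i :=
    Finset.prod_congr rfl fun i _ => hεsymm i (t+1)
  by_cases hTt : t+1 ∈ T <;> by_cases hSt : t+1 ∈ S
  · -- both contain t+1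
    conv_lhs => rw [← Finset.insert_erase hTt, ← Finset.insert_erase hSt]
    rw [qu_insert_left ε (Finset.notMem_erase _ _),
      qu_insert_right ε (Finset.notMem_erase _ _),
      prod_ite_lt_topu ε (fun j hj => hS (by
        rcases Finset.mem_insert.mp hj with h | h
        · exact h ▸ hSt
        · exact Finset.mem_of_mem_erase h)),
      prod_ite_lt_topu' ε hT', hsymmprod, if_pos hSt, one_mul, mul_comm]
  · -- t+1 ∈ T only
    conv_lhs => rw [← Finset.insert_erase hTt]
    rw [qu_insert_left ε (Finset.notMem_erase _ _), prod_ite_lt_topu ε hS,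
      if_neg hSt, one_mul, mul_one, Finset.erase_eq_of_notMem hSt]
  · -- t+1 ∈ S only
    have hTe : T.erase (t+1) = T := Finset.erase_eq_of_notMem hTt
    have hsymm2 : (∏ i ∈ T, ε i (t+1)) = ∏ i ∈ T, ε (t+1) i :=
      Finset.prod_congr rfl fun i _ => hεsymm i (t+1)
    conv_lhs => rw [← Finset.insert_erase hSt]
    rw [qu_insert_right ε (Finset.notMem_erase _ _), hTe,
      prod_ite_lt_topu' ε (hTe ▸ hT'), hsymm2, if_pos hSt, mul_comm]
  · rw [if_neg hSt, Finset.erase_eq_of_notMem hSt, Finset.erase_eq_of_notMem hTt, mul_one]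

lemma erase_symmDiff (S T : Finset ℕ) (a : ℕ) :
    (S ∆ T).erase a = (S.erase a) ∆ (T.erase a) := by
  ext i
  simp only [Finset.mem_erase, Finset.mem_symmDiff]
  tauto

include hinv hεsymm hcomm in
lemma WS_mul : ∀ t, ∀ S T : Finset ℕ, S ⊆ range (t+1) → T ⊆ range (t+1) →
    WS P S t * WS P T t = signC (qu ε T S) • WS P (S ∆ T) t
  | 0, S, T, hS, hT => by
      have hSc := Finset.subset_singleton_iff.mp (by simpa [Finset.range_one] using hS)
      have hTc := Finset.subset_singleton_iff.mp (by simpa [Finset.range_one] using hT)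
      rcases hSc with rfl | rfl <;> rcases hTc with rfl | rfl <;>
        simp [WS, qu, signC_one, hinv 0, symmDiff_self, Finset.bot_eq_empty,
          Finset.mem_symmDiff, WS_empty]
  | (t+1), S, T, hS, hT => by
      classical
      have hS' : S.erase (t+1) ⊆ range (t+1) := erase_range_subset hS
      have hT' : T.erase (t+1) ⊆ range (t+1) := erase_range_subset hT
      have hXW : (if t+1 ∈ S then P (t+1) else 1) * WS P (T.erase (t+1)) t
          = (if t+1 ∈ S then ∏ i ∈ T.erase (t+1), signC (ε (t+1) i) else 1) •
            (WS P (T.erase (t+1)) t * (if t+1 ∈ S then P (t+1) else 1)) := by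
        by_cases hSt : t+1 ∈ S
        · simp only [if_pos hSt]
          exact WS_comm P ε hcomm t _ hT' (t+1)
        · simp only [if_neg hSt, one_smul, one_mul, mul_one]
      have hXX : (if t+1 ∈ S then P (t+1) else 1) * (if t+1 ∈ T then P (t+1) else 1)
          = if t+1 ∈ S ∆ T then P (t+1) else 1 := by
        by_cases hSt : t+1 ∈ S <;> by_cases hTt : t+1 ∈ T <;>
          simp [hSt, hTt, Finset.mem_symmDiff, hinv (t+1)]
      rw [WS_succ_eq, WS_succ_eq, WS_succ_eq]
      calc WS P (S.erase (t+1)) t * (if t+1 ∈ S then P (t+1) else 1) *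
            (WS P (T.erase (t+1)) t * (if t+1 ∈ T then P (t+1) else 1))
          = WS P (S.erase (t+1)) t * ((if t+1 ∈ S then P (t+1) else 1) * WS P (T.erase (t+1)) t) *
            (if t+1 ∈ T then P (t+1) else 1) := by
            rw [mul_assoc, mul_assoc, mul_assoc]
        _ = (if t+1 ∈ S then ∏ i ∈ T.erase (t+1), signC (ε (t+1) i) else 1) •
            (WS P (S.erase (t+1)) t * WS P (T.erase (t+1)) t *
              ((if t+1 ∈ S then P (t+1) else 1) * (if t+1 ∈ T then P (t+1) else 1))) := by
            rw [hXW, mul_smul_comm, smul_mul_assoc]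
            congr 1
            rw [mul_assoc, mul_assoc, mul_assoc]
        _ = ((if t+1 ∈ S then ∏ i ∈ T.erase (t+1), signC (ε (t+1) i) else 1) *
              signC (qu ε (T.erase (t+1)) (S.erase (t+1)))) •
            (WS P ((S.erase (t+1)) ∆ (T.erase (t+1))) t * (if t+1 ∈ S ∆ T then P (t+1) else 1)) := by
            rw [WS_mul t _ _ hS' hT', hXX, smul_mul_assoc, smul_smul, mul_comm]
        _ = signC (qu ε T S) • (WS P ((S ∆ T).erase (t+1)) t *
              (if t+1 ∈ S ∆ T then P (t+1) else 1)) := by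
            rw [erase_symmDiff]
            congr 1
            rw [qu_step ε hεsymm hS hT, signC_mul]
            by_cases hSt : t+1 ∈ S <;> simp [hSt, signC_prod, signC_one, mul_comm]

include hherm hεsymm hcomm in
lemma WS_star : ∀ t, ∀ S : Finset ℕ, S ⊆ range (t+1) →
    (WS P S t)ᴴ = signC (qu ε S S) • WS P S t
  | 0, S, hS => by
      have hSc := Finset.subset_singleton_iff.mp (by simpa [Finset.range_one] using hS)
      rcases hSc with rfl | rfl <;> simp [WS, qu, signC_one, hherm 0]
  | (t+1), S, hS => by
      classical
      have hS' : S.erase (t+1) ⊆ range (t+1) := erase_range_subset hS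
      have hXh : (if t+1 ∈ S then P (t+1) else 1)ᴴ = (if t+1 ∈ S then P (t+1) else 1) := by
        by_cases hSt : t+1 ∈ S <;> simp [hSt, hherm (t+1)]
      have hXW : (if t+1 ∈ S then P (t+1) else 1) * WS P (S.erase (t+1)) t
          = (if t+1 ∈ S then ∏ i ∈ S.erase (t+1), signC (ε (t+1) i) else 1) •
            (WS P (S.erase (t+1)) t * (if t+1 ∈ S then P (t+1) else 1)) := by
        by_cases hSt : t+1 ∈ S
        · simp only [if_pos hSt]
          exact WS_comm P ε hcomm t _ hS' (t+1)
        · simp only [if_neg hSt, one_smul, one_mul, mul_one]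
      rw [WS_succ_eq, Matrix.conjTranspose_mul, hXh,
        WS_star t _ hS', mul_smul_comm, hXW, smul_smul]
      congr 1
      rw [qu_step ε hεsymm hS hS, signC_mul]
      by_cases hSt : t+1 ∈ S
      · rw [if_pos hSt, if_pos hSt, signC_prod, mul_comm]
      · rw [if_neg hSt, if_neg hSt, signC_one, mul_one]
end words2
end Stmt5
namespace Stmt5
open Finset
open scoped symmDiff

section expand
variable {d : ℕ} (P : ℕ → Matrix (Fin d) (Fin d) ℂ)

lemma piOpRev_expand (m : ℕ → ℤˣ) :
    ∀ t, PiOpRev P m t = ∑ S ∈ (range (t+1)).powerset,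
      ((2:ℂ)⁻¹^(t+1) * signC (∏ j ∈ S, m j)) • WS P S t
  | 0 => by
      rw [PiOpRev, Finset.range_one,
        show ({0} : Finset ℕ).powerset = insert ∅ {{0}} from by decide]
      rw [Finset.sum_insert (by decide), Finset.sum_singleton]
      simp only [Finset.prod_empty, Finset.prod_singleton, signC_one, pow_one]
      show (2⁻¹ : ℂ) • (1 + signC (m 0) • P 0) = _
      rw [smul_add]
      congr 1
      · simp [WS]
      · rw [smul_smul]
        simp [WS]
  | (t+1) => by
      classical
      rw [PiOpRev, piOpRev_expand m t]
      have hproj : ∀ S ∈ (range (t+1)).powerset,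
          (((2:ℂ)⁻¹^(t+1) * signC (∏ j ∈ S, m j)) • WS P S t) * proj (P (t+1)) (m (t+1))
          = ((2:ℂ)⁻¹^(t+2) * signC (∏ j ∈ S, m j)) • WS P S (t+1)
            + ((2:ℂ)⁻¹^(t+2) * signC (∏ j ∈ insert (t+1) S, m j)) • WS P (insert (t+1) S) (t+1) := by
        intro S hS
        have hmem : t+1 ∉ S := fun hc => by
          have := Finset.mem_range.mp ((Finset.mem_powerset.mp hS) hc); omega
        have h1 : WS P S (t+1) = WS P S t := by
          rw [WS, if_neg hmem, mul_one]
        have h2 : WS P (insert (t+1) S) (t+1) = WS P S t * P (t+1) := by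
          rw [WS, if_pos (Finset.mem_insert_self _ _)]
          congr 1
          exact WS_congr P t (fun j hj => by
            constructor
            · intro h
              rcases Finset.mem_insert.mp h with h | h
              · omega
              · exact h
            · intro h; exact Finset.mem_insert_of_mem h)
        have h3 : (∏ j ∈ insert (t+1) S, m j) = m (t+1) * ∏ j ∈ S, m j :=
          Finset.prod_insert hmem
        rw [proj, h1, h2, h3, signC_mul, mul_smul_comm, mul_add, mul_one, smul_add]
        congr 1
        · rw [smul_smul]
          congr 1
          ring
        · rw [smul_mul_assoc, mul_smul_comm, smul_smul, smul_smul]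
          congr 1
          ring
      rw [Finset.sum_mul, Finset.sum_congr rfl hproj, Finset.sum_add_distrib,
        show range (t+1+1) = insert (t+1) (range (t+1)) from Finset.range_add_one,
        Finset.sum_powerset_insert (by simp)]
end expand
end Stmt5
namespace Stmt5
open Finset
open scoped symmDiff

lemma extSign_mul {τ : ℕ} (m m' : Fin τ → ℤˣ) (j : ℕ) :
    extSign τ (m * m') j = extSign τ m j * extSign τ m' j := by
  unfold extSign
  by_cases h : j < τ <;> simp [h]

/-- character orthogonality over the sign group -/
lemma sum_chi {τ : ℕ} (S : Finset ℕ) (hS : S ⊆ range τ) :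
    (∑ m : Fin τ → ℤˣ, signC (∏ j ∈ S, extSign τ m j))
      = if S = ∅ then (2:ℂ)^τ else 0 := by
  classical
  by_cases hemp : S = ∅
  · subst hemp
    rw [if_pos rfl]
    simp only [Finset.prod_empty, signC_one, Finset.sum_const, Finset.card_univ]
    rw [Fintype.card_pi]
    simp [show Fintype.card ℤˣ = 2 from by decide]
  · rw [if_neg hemp]
    obtain ⟨j0, hj0⟩ := Finset.nonempty_of_ne_empty hemp
    have hj0τ : j0 < τ := Finset.mem_range.mp (hS hj0)
    set g0 : Fin τ → ℤˣ := fun j => if (j : ℕ) = j0 then -1 else 1 with hg0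
    have key : ∀ m : Fin τ → ℤˣ,
        signC (∏ j ∈ S, extSign τ (g0 * m) j) = - signC (∏ j ∈ S, extSign τ m j) := by
      intro m
      have h1 : (∏ j ∈ S, extSign τ (g0 * m) j)
          = (∏ j ∈ S, extSign τ g0 j) * ∏ j ∈ S, extSign τ m j := by
        rw [← Finset.prod_mul_distrib]
        exact Finset.prod_congr rfl fun j _ => extSign_mul g0 m j
      have h2 : (∏ j ∈ S, extSign τ g0 j) = -1 := by
        rw [Finset.prod_eq_single j0]
        · unfold extSign
          rw [dif_pos hj0τ, hg0]
          simp
        · intro j hj hne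
          have hjτ : j < τ := Finset.mem_range.mp (hS hj)
          unfold extSign
          rw [dif_pos hjτ, hg0]
          simp [hne]
        · intro h; exact absurd hj0 h
      rw [h1, h2, signC_mul, signC_neg_one]
      ring
    have hbij := Group.mulLeft_bijective g0
    have hsum : (∑ m : Fin τ → ℤˣ, signC (∏ j ∈ S, extSign τ (g0 * m) j))
        = ∑ m : Fin τ → ℤˣ, signC (∏ j ∈ S, extSign τ m j) :=
      Fintype.sum_bijective _ hbij _ _ (fun m => rfl)
    have heq : (∑ m : Fin τ → ℤˣ, signC (∏ j ∈ S, extSign τ m j))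
        = - ∑ m : Fin τ → ℤˣ, signC (∏ j ∈ S, extSign τ m j) := by
      conv_lhs => rw [← hsum, Finset.sum_congr rfl (fun m _ => key m)]
      rw [Finset.sum_neg_distrib]
    have h2 : (2:ℂ) * ∑ m : Fin τ → ℤˣ, signC (∏ j ∈ S, extSign τ m j) = 0 := by
      linear_combination heq
    simpa using h2

/-- sum over all subsets of a product of signs -/
lemma sum_signC_qu {τ : ℕ} (ε : ℕ → ℕ → ℤˣ) (T : Finset ℕ) :
    (∑ A ∈ (range τ).powerset, signC (qu ε A T))
      = if (∀ i ∈ range τ, (∏ j ∈ T, if i < j then ε i j else 1) = 1)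
        then (2:ℂ)^τ else 0 := by
  classical
  have hexp : ∀ A ∈ (range τ).powerset,
      signC (qu ε A T) = (∏ i ∈ A, signC (∏ j ∈ T, if i < j then ε i j else 1)) *
        ∏ i ∈ (range τ) \ A, (1:ℂ) := by
    intro A _
    rw [qu, signC_prod]
    simp
  rw [Finset.sum_congr rfl hexp, ← Finset.prod_add]
  by_cases hc : ∀ i ∈ range τ, (∏ j ∈ T, if i < j then ε i j else 1) = 1
  · rw [if_pos hc]
    have : ∀ i ∈ range τ,
        signC (∏ j ∈ T, if i < j then ε i j else 1) + 1 = 2 := by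
      intro i hi; rw [hc i hi, signC_one]; norm_num
    rw [Finset.prod_congr rfl this, Finset.prod_const, Finset.card_range]
  · rw [if_neg hc]
    push_neg at hc
    obtain ⟨i0, hi0, hne⟩ := hc
    have : signC (∏ j ∈ T, if i0 < j then ε i0 j else 1) + 1 = 0 := by
      rcases Int.units_eq_one_or (∏ j ∈ T, if i0 < j then ε i0 j else 1) with h | h
      · exact absurd h hne
      · rw [h, signC_neg_one]; ring
    exact Finset.prod_eq_zero hi0 this

end Stmt5
namespace Stmt5
open Finset
open scoped symmDiff

/-- `ℤˣ → ZMod 2`, `1 ↦ 0`, `-1 ↦ 1`. -/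
def itoz (u : ℤˣ) : ZMod 2 := if u = 1 then 0 else 1

lemma itoz_mul (u v : ℤˣ) : itoz (u * v) = itoz u + itoz v := by
  rcases Int.units_eq_one_or u with h | h <;> rcases Int.units_eq_one_or v with h' | h' <;>
    subst h <;> subst h' <;> decide
lemma itoz_eq_zero {u : ℤˣ} : itoz u = 0 ↔ u = 1 := by
  rcases Int.units_eq_one_or u with h | h <;> subst h <;> decide
lemma itoz_eq_one {u : ℤˣ} : itoz u = 1 ↔ u = -1 := by
  rcases Int.units_eq_one_or u with h | h <;> subst h <;> decide
lemma itoz_inj {u v : ℤˣ} (h : itoz u = itoz v) : u = v := by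
  rcases Int.units_eq_one_or u with h1 | h1 <;> rcases Int.units_eq_one_or v with h2 | h2 <;>
    subst h1 <;> subst h2 <;> first | rfl | exact absurd h (by decide)

/-- `ZMod 2 → ℤˣ`, inverse of `itoz`. -/
def ztoi (c : ZMod 2) : ℤˣ := if c = 0 then 1 else -1

lemma itoz_ztoi (c : ZMod 2) : itoz (ztoi c) = c := by
  revert c; decide
lemma ztoi_itoz (u : ℤˣ) : ztoi (itoz u) = u := by
  rcases Int.units_eq_one_or u with h | h <;> subst h <;> decide

lemma itoz_prod (S : Finset ℕ) (f : ℕ → ℤˣ) :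
    itoz (∏ j ∈ S, f j) = ∑ j ∈ S, itoz (f j) := by
  classical
  induction S using Finset.induction with
  | empty => simp [itoz]
  | insert _ _ h ih =>
      rw [Finset.prod_insert h, Finset.sum_insert h, itoz_mul, ih]

section linalg
variable {τ : ℕ}

/-- signs to `𝔽₂` vectors -/
def svec (m : Fin τ → ℤˣ) : Fin τ → ZMod 2 := fun j => itoz (m j)
/-- `𝔽₂` vectors to signs -/
def sinv (v : Fin τ → ZMod 2) : Fin τ → ℤˣ := fun j => ztoi (v j)

lemma svec_mul (a b : Fin τ → ℤˣ) : svec (a * b) = svec a + svec b := by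
  funext j; exact itoz_mul _ _
lemma svec_one : svec (1 : Fin τ → ℤˣ) = 0 := by
  funext j; simp [svec, itoz]
lemma svec_sinv (v : Fin τ → ZMod 2) : svec (sinv v) = v := by
  funext j; exact itoz_ztoi _
lemma sinv_svec (m : Fin τ → ℤˣ) : sinv (svec m) = m := by
  funext j; exact ztoi_itoz _
lemma svec_injective : Function.Injective (svec (τ := τ)) := by
  intro a b h
  rw [← sinv_svec a, h, sinv_svec]
lemma units_inv_self (m : Fin τ → ℤˣ) : m⁻¹ = m := by
  funext j
  show (m j)⁻¹ = m j
  rcases Int.units_eq_one_or (m j) with h | h <;> rw [h] <;> decide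

/-- the standard bilinear (dot-product) form on `Fin τ → ZMod 2` -/
def Bform : LinearMap.BilinForm (ZMod 2) (Fin τ → ZMod 2) :=
  LinearMap.mk₂ (ZMod 2) (fun x y => ∑ i, x i * y i)
    (fun m₁ m₂ n => by simp [add_mul, Finset.sum_add_distrib])
    (fun c m n => by simp [Finset.mul_sum, mul_assoc])
    (fun m n₁ n₂ => by simp [mul_add, Finset.sum_add_distrib])
    (fun c m n => by
      simp only [Pi.smul_apply, smul_eq_mul, Finset.mul_sum]
      exact Finset.sum_congr rfl fun i _ => by ring)

lemma Bform_apply (x y : Fin τ → ZMod 2) : Bform x y = ∑ i, x i * y i := rfl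

lemma Bform_symm (x y : Fin τ → ZMod 2) : Bform x y = Bform y x := by
  rw [Bform_apply, Bform_apply]
  exact Finset.sum_congr rfl fun i _ => mul_comm _ _

lemma Bform_isRefl : (Bform (τ := τ)).IsRefl := fun x y h => by
  rw [Bform_symm]; exact h

lemma Bform_nondegenerate : (Bform (τ := τ)).Nondegenerate := by
  refine (LinearMap.IsRefl.nondegenerate_iff_separatingLeft Bform_isRefl).mpr ?_
  intro x hx
  funext i
  have := hx (Pi.single i 1)
  rw [Bform_apply] at this
  rw [Finset.sum_eq_single i] at this
  · simpa using this
  · intro j _ hj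
    simp [Pi.single_apply, hj]
  · intro h; exact absurd (Finset.mem_univ i) h

/-- the rows of the binary check matrix -/
def rows (ε : ℕ → ℕ → ℤˣ) (i : Fin τ) : Fin τ → ZMod 2 := svec (ehatRev ε i)

/-- the row space -/
def Wsp (τ : ℕ) (ε : ℕ → ℕ → ℤˣ) : Submodule (ZMod 2) (Fin τ → ZMod 2) :=
  Submodule.span (ZMod 2) (Set.range (rows ε))

/-- membership in `Ê_rev` corresponds to membership in the row space -/
lemma mem_EhatRev_iff_svec_mem {ε : ℕ → ℕ → ℤˣ} {s : Fin τ → ℤˣ} :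
    s ∈ EhatRev τ ε ↔ svec s ∈ Wsp τ ε := by
  constructor
  · intro hs
    induction hs using Subgroup.closure_induction with
    | mem x hx =>
        obtain ⟨i, rfl⟩ := hx
        exact Submodule.subset_span ⟨i, rfl⟩
    | one => rw [svec_one]; exact Submodule.zero_mem _
    | mul x y _ _ hx hy => rw [svec_mul]; exact Submodule.add_mem _ hx hy
    | inv x _ hx => rwa [units_inv_self]
  · intro hs
    have key : ∀ v ∈ Wsp τ ε, sinv v ∈ EhatRev τ ε := by
      intro v hv
      induction hv using Submodule.span_induction with
      | mem x hx =>
          obtain ⟨i, rfl⟩ := hx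
          have : sinv (rows ε i) = ehatRev ε i := by
            rw [rows, sinv_svec]
          rw [this]
          exact Subgroup.subset_closure ⟨i, rfl⟩
      | zero =>
          have : sinv (0 : Fin τ → ZMod 2) = 1 := by
            rw [← svec_one, sinv_svec]
          rw [this]; exact Subgroup.one_mem _
      | add x y hx hy ihx ihy =>
          have : sinv (x + y) = sinv x * sinv y := by
            apply svec_injective
            rw [svec_sinv, svec_mul, svec_sinv, svec_sinv]
          rw [this]; exact Subgroup.mul_mem _ ihx ihy
      | smul c x hx ihx =>
          rcases (by decide : ∀ c : ZMod 2, c = 0 ∨ c = 1) c with rfl | rfl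
          · rw [zero_smul]
            have : sinv (0 : Fin τ → ZMod 2) = 1 := by rw [← svec_one, sinv_svec]
            rw [this]; exact Subgroup.one_mem _
          · rwa [one_smul]
    have := key (svec s) hs
    rwa [sinv_svec] at this

end linalg
end Stmt5
namespace Stmt5
open Finset
open scoped symmDiff

section dict
variable {τ : ℕ}

/-- characteristic vector of a finset -/
def vecT (τ : ℕ) (T : Finset ℕ) : Fin τ → ZMod 2 := fun j => if (j:ℕ) ∈ T then 1 else 0
/-- finset of a characteristic vector -/
def tset (τ : ℕ) (v : Fin τ → ZMod 2) : Finset ℕ :=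
  Finset.image Fin.val (Finset.univ.filter fun j => v j = 1)

lemma tset_subset (v : Fin τ → ZMod 2) : tset τ v ⊆ range τ := by
  intro i hi
  obtain ⟨j, _, rfl⟩ := Finset.mem_image.mp hi
  exact Finset.mem_range.mpr j.isLt

lemma mem_tset {v : Fin τ → ZMod 2} {j : Fin τ} : (j : ℕ) ∈ tset τ v ↔ v j = 1 := by
  constructor
  · intro h
    obtain ⟨j', hj', hval⟩ := Finset.mem_image.mp h
    have : j' = j := Fin.val_injective hval
    subst this
    exact (Finset.mem_filter.mp hj').2
  · intro h
    exact Finset.mem_image.mpr ⟨j, Finset.mem_filter.mpr ⟨Finset.mem_univ _, h⟩, rfl⟩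

lemma vecT_tset (v : Fin τ → ZMod 2) : vecT τ (tset τ v) = v := by
  funext j
  unfold vecT
  by_cases h : (j:ℕ) ∈ tset τ v
  · rw [if_pos h, (mem_tset.mp h)]
  · rw [if_neg h]
    have hne := fun hc => h (mem_tset.mpr hc)
    rcases (by decide : ∀ c : ZMod 2, c = 0 ∨ c = 1) (v j) with h0 | h0
    · rw [h0]
    · exact absurd h0 hne

lemma tset_vecT {T : Finset ℕ} (hT : T ⊆ range τ) : tset τ (vecT τ T) = T := by
  ext i
  constructor
  · intro hi
    obtain ⟨j, hj, rfl⟩ := Finset.mem_image.mp hi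
    have := (Finset.mem_filter.mp hj).2
    unfold vecT at this
    by_cases h : (j:ℕ) ∈ T
    · exact h
    · rw [if_neg h] at this; exact absurd this (by decide)
  · intro hi
    have hiτ : i < τ := Finset.mem_range.mp (hT hi)
    have : ((⟨i, hiτ⟩ : Fin τ) : ℕ) ∈ tset τ (vecT τ T) := by
      rw [mem_tset]
      unfold vecT
      rw [if_pos hi]
    exact this

lemma vecT_symmDiff (S T : Finset ℕ) : vecT τ (S ∆ T) = vecT τ S + vecT τ T := by
  funext j
  unfold vecT
  show _ = (_ : ZMod 2) + _
  by_cases hS : (j:ℕ) ∈ S <;> by_cases hT : (j:ℕ) ∈ T <;>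
    simp [Finset.mem_symmDiff, hS, hT] <;> decide

lemma bridge1 (s : Fin τ → ℤˣ) {T : Finset ℕ} (hT : T ⊆ range τ) :
    itoz (∏ j ∈ T, extSign τ s j) = Bform (svec s) (vecT τ T) := by
  classical
  rw [itoz_prod, Bform_apply]
  have hpt : ∀ j : Fin τ, svec s j * vecT τ T j
      = (fun n => if n ∈ T then itoz (extSign τ s n) else 0) (j : ℕ) := by
    intro j
    by_cases h : (j:ℕ) ∈ T
    · simp only [vecT, if_pos h, mul_one, svec]
      congr 1
      unfold extSign
      rw [dif_pos j.isLt]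
    · simp [vecT, if_neg h]
  calc ∑ j ∈ T, itoz (extSign τ s j)
      = ∑ n ∈ range τ ∩ T, itoz (extSign τ s n) := by rw [Finset.inter_eq_right.mpr hT]
    _ = ∑ n ∈ range τ, (if n ∈ T then itoz (extSign τ s n) else 0) :=
        (Finset.sum_ite_mem _ _ _).symm
    _ = ∑ j : Fin τ, (if (j:ℕ) ∈ T then itoz (extSign τ s (j:ℕ)) else 0) :=
        (Fin.sum_univ_eq_sum_range (fun n => if n ∈ T then itoz (extSign τ s n) else 0) τ).symm
    _ = ∑ j, svec s j * vecT τ T j := Finset.sum_congr rfl (fun j _ => (hpt j).symm)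

lemma bridge2 {ε : ℕ → ℕ → ℤˣ} (hεdiag : ∀ i, ε i i = 1) (i : Fin τ)
    {T : Finset ℕ} (hT : T ⊆ range τ) :
    itoz (∏ j ∈ T, if (i:ℕ) < j then ε (i:ℕ) j else 1) = Bform (rows ε i) (vecT τ T) := by
  rw [rows, ← bridge1 (ehatRev ε i) hT]
  congr 1
  refine Finset.prod_congr rfl fun j hj => ?_
  have hjτ : j < τ := Finset.mem_range.mp (hT hj)
  unfold extSign ehatRev
  rw [dif_pos hjτ]
  simp only [Fin.val_mk]
  rcases lt_trichotomy (i:ℕ) j with h | h | h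
  · rw [if_pos h, if_pos (le_of_lt h)]
  · rw [if_neg (by omega), if_pos (le_of_eq h), ← h, hεdiag]
  · rw [if_neg (by omega), if_neg (by omega)]

lemma cond_iff_mem_orth {ε : ℕ → ℕ → ℤˣ} (hεdiag : ∀ i, ε i i = 1)
    {T : Finset ℕ} (hT : T ⊆ range τ) :
    (∀ i ∈ range τ, (∏ j ∈ T, if i < j then ε i j else 1) = 1)
      ↔ vecT τ T ∈ Bform.orthogonal (Wsp τ ε) := by
  constructor
  · intro hc
    rw [LinearMap.BilinForm.mem_orthogonal_iff]
    intro n hn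
    induction hn using Submodule.span_induction with
    | mem x hx =>
        obtain ⟨i, rfl⟩ := hx
        show Bform (rows ε i) (vecT τ T) = 0
        rw [← bridge2 hεdiag i hT, hc (i:ℕ) (Finset.mem_range.mpr i.isLt), itoz_eq_zero.mpr rfl]
    | zero => exact LinearMap.isOrtho_zero_left _ _
    | add x y _ _ ihx ihy =>
        have ihx' : Bform x (vecT τ T) = 0 := ihx
        have ihy' : Bform y (vecT τ T) = 0 := ihy
        show Bform (x + y) (vecT τ T) = 0
        rw [map_add, LinearMap.add_apply, ihx', ihy', add_zero]
    | smul c x _ ihx =>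
        have ihx' : Bform x (vecT τ T) = 0 := ihx
        show Bform (c • x) (vecT τ T) = 0
        rw [_root_.map_smul, LinearMap.smul_apply, ihx', smul_zero]
  · intro hv i hi
    have hiτ : i < τ := Finset.mem_range.mp hi
    have hrow : rows ε ⟨i, hiτ⟩ ∈ Wsp τ ε := Submodule.subset_span ⟨⟨i, hiτ⟩, rfl⟩
    have := (LinearMap.BilinForm.mem_orthogonal_iff.mp hv) _ hrow
    rw [← bridge2 hεdiag ⟨i, hiτ⟩ hT] at this
    exact itoz_eq_zero.mp this

end dict
end Stmt5
namespace Stmt5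
open Finset
open scoped symmDiff

section count
variable {τ : ℕ} (ε : ℕ → ℕ → ℤˣ)

/-- the group `Ê_rev` and the row space are in bijection -/
noncomputable def ehatEquiv : (EhatRev τ ε) ≃ (Wsp τ ε) where
  toFun x := ⟨svec x.1, mem_EhatRev_iff_svec_mem.mp x.2⟩
  invFun v := ⟨sinv v.1, mem_EhatRev_iff_svec_mem.mpr (by rw [svec_sinv]; exact v.2)⟩
  left_inv x := Subtype.ext (sinv_svec _)
  right_inv v := Subtype.ext (svec_sinv _)

lemma card_Ehat_eq : Nat.card (EhatRev τ ε)
    = 2 ^ (Module.finrank (ZMod 2) (Wsp τ ε)) := by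
  classical
  haveI : Fintype (Wsp τ ε) := Fintype.ofFinite _
  rw [Nat.card_congr (ehatEquiv ε), Nat.card_eq_fintype_card,
    Module.card_eq_pow_finrank (K := ZMod 2), ZMod.card 2]

lemma finrank_V : Module.finrank (ZMod 2) (Fin τ → ZMod 2) = τ := by
  rw [Module.finrank_fintype_fun_eq_card, Fintype.card_fin]

lemma card_orth_eq : Nat.card (LinearMap.BilinForm.orthogonal Bform (Wsp τ ε))
    = 2 ^ (τ - Module.finrank (ZMod 2) (Wsp τ ε)) := by
  classical
  haveI : Fintype (LinearMap.BilinForm.orthogonal Bform (Wsp τ ε)) := Fintype.ofFinite _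
  rw [Nat.card_eq_fintype_card, Module.card_eq_pow_finrank (K := ZMod 2), ZMod.card 2,
    LinearMap.BilinForm.finrank_orthogonal Bform_nondegenerate, finrank_V]

lemma card_Ehat_mul_card_orth :
    (Nat.card (EhatRev τ ε)) * Nat.card (LinearMap.BilinForm.orthogonal Bform (Wsp τ ε))
      = 2 ^ τ := by
  rw [card_Ehat_eq, card_orth_eq, ← pow_add]
  congr 1
  have h := Submodule.finrank_le (Wsp τ ε)
  rw [finrank_V] at h
  omega

lemma card_K_eq (hεdiag : ∀ i, ε i i = 1) :
    ((range τ).powerset.filter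
      (fun T => ∀ i ∈ range τ, (∏ j ∈ T, if i < j then ε i j else 1) = (1:ℤˣ))).card
    = Nat.card (LinearMap.BilinForm.orthogonal Bform (Wsp τ ε)) := by
  classical
  have hcard : Nat.card (LinearMap.BilinForm.orthogonal Bform (Wsp τ ε))
      = (Finset.univ.filter
          (fun v : Fin τ → ZMod 2 => v ∈ LinearMap.BilinForm.orthogonal Bform (Wsp τ ε))).card := by
    rw [Nat.card_eq_fintype_card]
    exact Fintype.card_subtype _
  rw [hcard]
  refine Finset.card_nbij' (vecT τ) (tset τ) ?_ ?_ ?_ ?_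
  · intro T hT
    rw [Finset.mem_coe, Finset.mem_filter] at hT
    obtain ⟨hT1, hT2⟩ := hT
    exact Finset.mem_filter.mpr ⟨Finset.mem_univ _,
      (cond_iff_mem_orth hεdiag (Finset.mem_powerset.mp hT1)).mp hT2⟩
  · intro v hv
    rw [Finset.mem_coe, Finset.mem_filter] at hv
    refine Finset.mem_filter.mpr ⟨Finset.mem_powerset.mpr (tset_subset v), ?_⟩
    rw [cond_iff_mem_orth hεdiag (tset_subset v), vecT_tset]
    exact hv.2
  · intro T hT
    exact tset_vecT (Finset.mem_powerset.mp (Finset.mem_filter.mp hT).1)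
  · intro v _
    exact vecT_tset v

/-- the main group-theoretic evaluation -/
lemma final_sum (hεdiag : ∀ i, ε i i = 1) (s : Fin τ → ℤˣ) :
    (∑ T ∈ (range τ).powerset.filter
        (fun T => ∀ i ∈ range τ, (∏ j ∈ T, if i < j then ε i j else 1) = (1:ℤˣ)),
      signC (∏ j ∈ T, extSign τ s j))
    = if s ∈ EhatRev τ ε
      then ((Nat.card (LinearMap.BilinForm.orthogonal Bform (Wsp τ ε)) : ℕ) : ℂ) else 0 := by
  classical
  by_cases hs : s ∈ EhatRev τ ε
  · rw [if_pos hs]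
    have hone : ∀ T ∈ (range τ).powerset.filter
        (fun T => ∀ i ∈ range τ, (∏ j ∈ T, if i < j then ε i j else 1) = (1:ℤˣ)),
        signC (∏ j ∈ T, extSign τ s j) = 1 := by
      intro T hT
      rw [Finset.mem_filter] at hT
      have hsub := Finset.mem_powerset.mp hT.1
      have horth := (cond_iff_mem_orth hεdiag hsub).mp hT.2
      have hW := mem_EhatRev_iff_svec_mem.mp hs
      have h0 : Bform (svec s) (vecT τ T) = 0 :=
        (LinearMap.BilinForm.mem_orthogonal_iff.mp horth) _ hW
      rw [← bridge1 s hsub] at h0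
      rw [itoz_eq_zero.mp h0, signC_one]
    rw [Finset.sum_congr rfl hone, Finset.sum_const, card_K_eq ε hεdiag, nsmul_eq_mul, mul_one]
  · rw [if_neg hs]
    have hW := fun h => hs (mem_EhatRev_iff_svec_mem.mpr h)
    have hdd : LinearMap.BilinForm.orthogonal Bform
        (LinearMap.BilinForm.orthogonal Bform (Wsp τ ε)) = Wsp τ ε :=
      LinearMap.BilinForm.orthogonal_orthogonal Bform_nondegenerate Bform_isRefl _
    have hnot : ¬ (svec s ∈ LinearMap.BilinForm.orthogonal Bform
        (LinearMap.BilinForm.orthogonal Bform (Wsp τ ε))) := by rw [hdd]; exact hW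
    rw [LinearMap.BilinForm.mem_orthogonal_iff] at hnot
    push_neg at hnot
    obtain ⟨v, hv, hvne⟩ := hnot
    have hv1 : Bform v (svec s) = 1 := by
      rcases (by decide : ∀ c : ZMod 2, c = 0 ∨ c = 1) (Bform v (svec s)) with h | h
      · exact absurd h hvne
      · exact h
    set T0 := tset τ v with hT0def
    have hT0sub : T0 ⊆ range τ := tset_subset v
    have hvT0 : vecT τ T0 = v := vecT_tset v
    have hT0mem : T0 ∈ (range τ).powerset.filter
        (fun T => ∀ i ∈ range τ, (∏ j ∈ T, if i < j then ε i j else 1) = (1:ℤˣ)) := by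
      refine Finset.mem_filter.mpr ⟨Finset.mem_powerset.mpr hT0sub, ?_⟩
      rw [cond_iff_mem_orth hεdiag hT0sub, hvT0]
      exact hv
    have hchiT0 : signC (∏ j ∈ T0, extSign τ s j) = -1 := by
      rw [signC_eq_neg_one_iff, ← itoz_eq_one]
      rw [bridge1 s hT0sub, hvT0, Bform_symm]
      exact hv1
    have hclosed : ∀ T ∈ (range τ).powerset.filter
        (fun T => ∀ i ∈ range τ, (∏ j ∈ T, if i < j then ε i j else 1) = (1:ℤˣ)),
        T ∆ T0 ∈ (range τ).powerset.filter
          (fun T => ∀ i ∈ range τ, (∏ j ∈ T, if i < j then ε i j else 1) = (1:ℤˣ)) := by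
      intro T hT
      rw [Finset.mem_filter] at hT
      have hsub := Finset.mem_powerset.mp hT.1
      have hsub' : T ∆ T0 ⊆ range τ := symmDiff_subset hsub hT0sub
      refine Finset.mem_filter.mpr ⟨Finset.mem_powerset.mpr hsub', ?_⟩
      rw [cond_iff_mem_orth hεdiag hsub', vecT_symmDiff, hvT0]
      exact Submodule.add_mem _ ((cond_iff_mem_orth hεdiag hsub).mp hT.2) hv
    have hre : (∑ T ∈ (range τ).powerset.filter
        (fun T => ∀ i ∈ range τ, (∏ j ∈ T, if i < j then ε i j else 1) = (1:ℤˣ)),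
        signC (∏ j ∈ T, extSign τ s j))
        = ∑ T ∈ (range τ).powerset.filter
        (fun T => ∀ i ∈ range τ, (∏ j ∈ T, if i < j then ε i j else 1) = (1:ℤˣ)),
        (- signC (∏ j ∈ T, extSign τ s j)) := by
      refine Finset.sum_nbij' (fun T => T ∆ T0) (fun T => T ∆ T0) hclosed hclosed
        (fun T _ => symmDiff_symmDiff_cancel_right T0 T)
        (fun T _ => symmDiff_symmDiff_cancel_right T0 T) ?_
      intro T hT
      rw [prod_symmDiff_units, signC_mul, hchiT0]
      ring
    have h2 : (2:ℂ) * ∑ T ∈ (range τ).powerset.filter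
        (fun T => ∀ i ∈ range τ, (∏ j ∈ T, if i < j then ε i j else 1) = (1:ℤˣ)),
        signC (∏ j ∈ T, extSign τ s j) = 0 := by
      rw [Finset.sum_neg_distrib] at hre
      linear_combination hre
    simpa using h2

end count
end Stmt5
namespace Stmt5
open Finset
open scoped symmDiff

section master
variable {d : ℕ} (P : ℕ → Matrix (Fin d) (Fin d) ℂ) (ε : ℕ → ℕ → ℤˣ)
variable (hherm : ∀ j, (P j)ᴴ = P j)
variable (hinv : ∀ j, P j * P j = 1)
variable (hεsymm : ∀ i j, ε i j = ε j i)
variable (hcomm : ∀ i j, P i * P j = signC (ε i j) • (P j * P i))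

lemma star_k (t : ℕ) : star ((2:ℂ)⁻¹^(t+1)) = (2:ℂ)⁻¹^(t+1) := by
  rw [star_pow, star_inv₀]
  norm_num

include hherm hεsymm hcomm in
lemma piOpRev_star_expand (t : ℕ) (m : Fin (t+1) → ℤˣ) :
    (PiOpRev P (extSign (t+1) m) t)ᴴ
      = ∑ S ∈ (range (t+1)).powerset,
        (((2:ℂ)⁻¹^(t+1) * signC (∏ j ∈ S, extSign (t+1) m j)) * signC (qu ε S S)) • WS P S t := by
  rw [piOpRev_expand P _ t, Matrix.conjTranspose_sum]
  refine Finset.sum_congr rfl fun S hS => ?_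
  rw [Matrix.conjTranspose_smul,
    WS_star P ε hherm hεsymm hcomm t S (Finset.mem_powerset.mp hS), smul_smul]
  congr 1
  rw [star_mul', star_signC, star_k, mul_comm]

/-- product of two `smul`-sums of matrices -/
lemma sum_smul_mul_sum_smul {ι κ : Type*} (s : Finset ι) (u : Finset κ)
    (f : ι → ℂ) (g : κ → ℂ)
    (M : ι → Matrix (Fin d) (Fin d) ℂ) (N : κ → Matrix (Fin d) (Fin d) ℂ) :
    (∑ A ∈ s, f A • M A) * (∑ B ∈ u, g B • N B)
      = ∑ A ∈ s, ∑ B ∈ u, (f A * g B) • (M A * N B) := by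
  rw [Finset.sum_mul]
  refine Finset.sum_congr rfl fun A _ => ?_
  rw [Finset.mul_sum]
  refine Finset.sum_congr rfl fun B _ => ?_
  rw [smul_mul_assoc, mul_smul_comm, smul_smul]

include hinv hεsymm hcomm in
lemma W_four (t : ℕ) {A B C E : Finset ℕ}
    (hA : A ⊆ range (t+1)) (hB : B ⊆ range (t+1)) (hC : C ⊆ range (t+1))
    (hE : E ⊆ range (t+1)) :
    WS P A t * WS P B t * WS P C t * WS P E t
      = (signC (qu ε B A) * signC (qu ε C (A ∆ B)) * signC (qu ε E (A ∆ B ∆ C))) •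
          WS P (A ∆ B ∆ C ∆ E) t := by
  have hAB : A ∆ B ⊆ range (t+1) := symmDiff_subset hA hB
  have hABC : A ∆ B ∆ C ⊆ range (t+1) := symmDiff_subset hAB hC
  rw [WS_mul P ε hinv hεsymm hcomm t A B hA hB, smul_mul_assoc, smul_mul_assoc,
    WS_mul P ε hinv hεsymm hcomm t _ C hAB hC, smul_mul_assoc,
    WS_mul P ε hinv hεsymm hcomm t _ E hABC hE, smul_smul, smul_smul]

include hherm hinv hεsymm hcomm in
lemma prob_expand (t : ℕ) (m s : Fin (t+1) → ℤˣ) :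
    ProbRev d (t+1) P m (m * s)
      = ∑ A ∈ (range (t+1)).powerset, ∑ B ∈ (range (t+1)).powerset,
        ∑ C ∈ (range (t+1)).powerset, ∑ E ∈ (range (t+1)).powerset,
        signC (∏ j ∈ E ∆ C ∆ B ∆ A, extSign (t+1) m j) *
        ((d:ℂ)⁻¹ * ((2:ℂ)⁻¹^(t+1))^4 *
         (signC (∏ j ∈ C ∆ B, extSign (t+1) s j) *
          signC (qu ε E E) * signC (qu ε B B) * signC (qu ε C E) *
          signC (qu ε B (E ∆ C)) * signC (qu ε A (E ∆ C ∆ B))) *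
         Matrix.trace (WS P (E ∆ C ∆ B ∆ A) t)) := by
  unfold ProbRev
  have ht1 : t + 1 - 1 = t := rfl
  rw [ht1, piOpRev_star_expand P ε hherm hεsymm hcomm t m,
    piOpRev_star_expand P ε hherm hεsymm hcomm t (m * s),
    piOpRev_expand P (extSign (t+1) (m*s)) t, piOpRev_expand P (extSign (t+1) m) t]
  simp only [Finset.sum_mul, Finset.mul_sum, smul_mul_assoc, mul_smul_comm, smul_smul,
    Matrix.trace_sum, Matrix.trace_smul, smul_eq_mul]
  refine Finset.sum_congr rfl fun A hA => ?_
  refine Finset.sum_congr rfl fun B hB => ?_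
  refine Finset.sum_congr rfl fun C hC => ?_
  refine Finset.sum_congr rfl fun E hE => ?_
  rw [W_four P ε hinv hεsymm hcomm t (Finset.mem_powerset.mp hE) (Finset.mem_powerset.mp hC)
    (Finset.mem_powerset.mp hB) (Finset.mem_powerset.mp hA)]
  rw [Matrix.trace_smul, smul_eq_mul]
  have hsplitB : (∏ j ∈ B, extSign (t+1) (m*s) j)
      = (∏ j ∈ B, extSign (t+1) m j) * (∏ j ∈ B, extSign (t+1) s j) := by
    rw [← Finset.prod_mul_distrib]
    exact Finset.prod_congr rfl fun j _ => extSign_mul m s j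
  have hsplitC : (∏ j ∈ C, extSign (t+1) (m*s) j)
      = (∏ j ∈ C, extSign (t+1) m j) * (∏ j ∈ C, extSign (t+1) s j) := by
    rw [← Finset.prod_mul_distrib]
    exact Finset.prod_congr rfl fun j _ => extSign_mul m s j
  have hm4 : (∏ j ∈ E ∆ C ∆ B ∆ A, extSign (t+1) m j)
      = (∏ j ∈ E, extSign (t+1) m j) * (∏ j ∈ C, extSign (t+1) m j) *
        (∏ j ∈ B, extSign (t+1) m j) * (∏ j ∈ A, extSign (t+1) m j) := by
    rw [prod_symmDiff_units, prod_symmDiff_units, prod_symmDiff_units]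
  have hsBC : (∏ j ∈ C ∆ B, extSign (t+1) s j)
      = (∏ j ∈ C, extSign (t+1) s j) * (∏ j ∈ B, extSign (t+1) s j) :=
    prod_symmDiff_units C B _
  rw [hsplitB, hsplitC, hm4, hsBC]
  simp only [signC_mul]
  ring

lemma units_cancel (u v : ℤˣ) : u * (u * v) = v := by
  rw [← mul_assoc, Int.units_mul_self, one_mul]

lemma sign_reduce (A B C : Finset ℕ) :
    qu ε (A ∆ B ∆ C) (A ∆ B ∆ C) * qu ε B B * qu ε C (A ∆ B ∆ C) * qu ε B (A ∆ B) * qu ε A A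
      = qu ε B B * qu ε A (B ∆ C) * qu ε B C := by
  simp only [qu_symmDiff_left, qu_symmDiff_right]
  simp [mul_comm, mul_left_comm, mul_assoc, Int.units_mul_self, units_cancel]

lemma symm4_empty_iff {A B C E : Finset ℕ} :
    E ∆ C ∆ B ∆ A = ∅ ↔ E = A ∆ B ∆ C := by
  constructor
  · intro h
    have h1 : E ∆ C ∆ B = A := symmDiff_eq_bot.mp h
    have h2 : E ∆ C = A ∆ B := by rw [← h1, symmDiff_symmDiff_cancel_right]
    have h3 : E = A ∆ B ∆ C := by rw [← h2, symmDiff_symmDiff_cancel_right]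
    exact h3
  · intro h
    subst h
    rw [symmDiff_symmDiff_cancel_right, symmDiff_symmDiff_cancel_right]
    exact symmDiff_self A

end master
end Stmt5

open Finset Stmt5
open scoped symmDiff

/-- for traceless measured Pauli operators, the total probability
of the sum outcome `s = m·m̄` in the system–reference distillation algorithm
(reverse-order measurements) is `1/|Ê_rev|` if `s ∈ Ê_rev` and `0` otherwise;
in particular `s` occurs with nonzero probability iff `s ∈ Ê_rev`. -/
theorem sum_probRev_eq_inv_card_EhatRev
    {d τ : ℕ} (hd : 1 ≤ d) (hτ : 1 ≤ τ)
    (P : ℕ → Matrix (Fin d) (Fin d) ℂ)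
    (hherm : ∀ j, (P j)ᴴ = P j)
    (hinv : ∀ j, P j * P j = 1)
    (ε : ℕ → ℕ → ℤˣ)
    (hεdiag : ∀ i, ε i i = 1)
    (hεsymm : ∀ i j, ε i j = ε j i)
    (hcomm : ∀ i j, P i * P j = signC (ε i j) • (P j * P i))
    (htr : ∀ j, Matrix.trace (P j) = 0)
    (s : Fin τ → ℤˣ) :
    (∑ m : Fin τ → ℤˣ, ProbRev d τ P m (m * s)) =
      if s ∈ EhatRev τ ε then ((Nat.card (EhatRev τ ε) : ℂ))⁻¹ else 0 := by

  classical
  obtain ⟨t, rfl⟩ : ∃ t, τ = t + 1 := ⟨τ - 1, by omega⟩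
  have hdC : (d:ℂ) ≠ 0 := Nat.cast_ne_zero.mpr (by omega)
  set K : ℂ := (d:ℂ)⁻¹ * ((2:ℂ)⁻¹^(t+1))^4 with hK
  -- Step 1: expand each ProbRev and pull the m-sum inside
  have hswap : ∀ (h : (Fin (t+1) → ℤˣ) → Finset ℕ → Finset ℕ → Finset ℕ → Finset ℕ → ℂ),
      (∑ m : Fin (t+1) → ℤˣ, ∑ A ∈ (range (t+1)).powerset, ∑ B ∈ (range (t+1)).powerset,
        ∑ C ∈ (range (t+1)).powerset, ∑ E ∈ (range (t+1)).powerset, h m A B C E)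
      = ∑ A ∈ (range (t+1)).powerset, ∑ B ∈ (range (t+1)).powerset,
        ∑ C ∈ (range (t+1)).powerset, ∑ E ∈ (range (t+1)).powerset,
        ∑ m : Fin (t+1) → ℤˣ, h m A B C E := by
    intro h
    rw [Finset.sum_comm]
    refine Finset.sum_congr rfl fun A _ => ?_
    rw [Finset.sum_comm]
    refine Finset.sum_congr rfl fun B _ => ?_
    rw [Finset.sum_comm]
    refine Finset.sum_congr rfl fun C _ => ?_
    rw [Finset.sum_comm]
  have step1 : (∑ m : Fin (t+1) → ℤˣ, ProbRev d (t+1) P m (m * s))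
      = ∑ A ∈ (range (t+1)).powerset, ∑ B ∈ (range (t+1)).powerset,
        ∑ C ∈ (range (t+1)).powerset, ∑ E ∈ (range (t+1)).powerset,
        ∑ m : Fin (t+1) → ℤˣ,
        signC (∏ j ∈ E ∆ C ∆ B ∆ A, extSign (t+1) m j) *
        (K * (signC (∏ j ∈ C ∆ B, extSign (t+1) s j) *
          signC (qu ε E E) * signC (qu ε B B) * signC (qu ε C E) *
          signC (qu ε B (E ∆ C)) * signC (qu ε A (E ∆ C ∆ B))) *
         Matrix.trace (WS P (E ∆ C ∆ B ∆ A) t)) := by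
    rw [Finset.sum_congr rfl
      (fun m _ => prob_expand P ε hherm hinv hεsymm hcomm t m s), hswap]
  -- Step 2: perform the m-sum, then collapse the E-sum
  have step2 : ∀ A ∈ (range (t+1)).powerset, ∀ B ∈ (range (t+1)).powerset,
      ∀ C ∈ (range (t+1)).powerset, ∀ E ∈ (range (t+1)).powerset,
      (∑ m : Fin (t+1) → ℤˣ,
        signC (∏ j ∈ E ∆ C ∆ B ∆ A, extSign (t+1) m j) *
        (K * (signC (∏ j ∈ C ∆ B, extSign (t+1) s j) *
          signC (qu ε E E) * signC (qu ε B B) * signC (qu ε C E) *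
          signC (qu ε B (E ∆ C)) * signC (qu ε A (E ∆ C ∆ B))) *
         Matrix.trace (WS P (E ∆ C ∆ B ∆ A) t)))
      = (if E = A ∆ B ∆ C then (2:ℂ)^(t+1) *
        (K * (signC (∏ j ∈ C ∆ B, extSign (t+1) s j) *
          signC (qu ε E E) * signC (qu ε B B) * signC (qu ε C E) *
          signC (qu ε B (E ∆ C)) * signC (qu ε A (E ∆ C ∆ B))) *
         Matrix.trace (WS P (E ∆ C ∆ B ∆ A) t)) else 0) := by
    intro A hA B hB C hC E hE
    have hsub : E ∆ C ∆ B ∆ A ⊆ range (t+1) :=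
      symmDiff_subset (symmDiff_subset (symmDiff_subset (Finset.mem_powerset.mp hE)
        (Finset.mem_powerset.mp hC)) (Finset.mem_powerset.mp hB)) (Finset.mem_powerset.mp hA)
    rw [← Finset.sum_mul, sum_chi _ hsub, ite_mul, zero_mul,
      if_congr (symm4_empty_iff (A := A) (B := B) (C := C) (E := E)) rfl rfl]
  -- Step 3: collapse the E-sum and simplify each (A,B,C) term
  have hmemABC : ∀ A ∈ (range (t+1)).powerset, ∀ B ∈ (range (t+1)).powerset,
      ∀ C ∈ (range (t+1)).powerset, A ∆ B ∆ C ∈ (range (t+1)).powerset := by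
    intro A hA B hB C hC
    exact Finset.mem_powerset.mpr (symmDiff_subset (symmDiff_subset
      (Finset.mem_powerset.mp hA) (Finset.mem_powerset.mp hB)) (Finset.mem_powerset.mp hC))
  have step3 : ∀ A ∈ (range (t+1)).powerset, ∀ B ∈ (range (t+1)).powerset,
      ∀ C ∈ (range (t+1)).powerset,
      (∑ E ∈ (range (t+1)).powerset,
        if E = A ∆ B ∆ C then (2:ℂ)^(t+1) *
          (K * (signC (∏ j ∈ C ∆ B, extSign (t+1) s j) *
            signC (qu ε E E) * signC (qu ε B B) * signC (qu ε C E) *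
            signC (qu ε B (E ∆ C)) * signC (qu ε A (E ∆ C ∆ B))) *
           Matrix.trace (WS P (E ∆ C ∆ B ∆ A) t)) else 0)
      = signC (qu ε A (B ∆ C)) *
        ((2:ℂ)^(t+1) * K * (d:ℂ) * signC (∏ j ∈ B ∆ C, extSign (t+1) s j) *
          signC (qu ε B B) * signC (qu ε B C)) := by
    intro A hA B hB C hC
    rw [Finset.sum_ite_eq' _ (A ∆ B ∆ C) _, if_pos (hmemABC A hA B hB C hC)]
    have hEC : (A ∆ B ∆ C) ∆ C = A ∆ B := symmDiff_symmDiff_cancel_right C (A ∆ B)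
    have hECB : (A ∆ B) ∆ B = A := symmDiff_symmDiff_cancel_right B A
    rw [hEC, hECB, symmDiff_self, Finset.bot_eq_empty, WS_empty, Matrix.trace_one,
      Fintype.card_fin]
    have hsgn : signC (qu ε (A ∆ B ∆ C) (A ∆ B ∆ C)) * signC (qu ε B B) *
        signC (qu ε C (A ∆ B ∆ C)) * signC (qu ε B (A ∆ B)) * signC (qu ε A A)
        = signC (qu ε B B) * signC (qu ε A (B ∆ C)) * signC (qu ε B C) := by
      simp only [← signC_mul]
      exact congrArg signC (sign_reduce ε A B C)
    have hχ : (∏ j ∈ C ∆ B, extSign (t+1) s j) = ∏ j ∈ B ∆ C, extSign (t+1) s j := by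
      rw [symmDiff_comm]
    rw [hχ]
    calc (2:ℂ)^(t+1) * (K * (signC (∏ j ∈ B ∆ C, extSign (t+1) s j) *
            signC (qu ε (A ∆ B ∆ C) (A ∆ B ∆ C)) * signC (qu ε B B) *
            signC (qu ε C (A ∆ B ∆ C)) * signC (qu ε B (A ∆ B)) * signC (qu ε A A)) * (d:ℂ))
        = (2:ℂ)^(t+1) * (K * (signC (∏ j ∈ B ∆ C, extSign (t+1) s j) *
            (signC (qu ε (A ∆ B ∆ C) (A ∆ B ∆ C)) * signC (qu ε B B) *
             signC (qu ε C (A ∆ B ∆ C)) * signC (qu ε B (A ∆ B)) * signC (qu ε A A))) * (d:ℂ)) := by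
          ring
      _ = (2:ℂ)^(t+1) * (K * (signC (∏ j ∈ B ∆ C, extSign (t+1) s j) *
            (signC (qu ε B B) * signC (qu ε A (B ∆ C)) * signC (qu ε B C))) * (d:ℂ)) := by
          rw [hsgn]
      _ = _ := by ring
  have step123 : (∑ m : Fin (t+1) → ℤˣ, ProbRev d (t+1) P m (m * s))
      = ∑ A ∈ (range (t+1)).powerset, ∑ B ∈ (range (t+1)).powerset,
        ∑ C ∈ (range (t+1)).powerset,
        signC (qu ε A (B ∆ C)) *
        ((2:ℂ)^(t+1) * K * (d:ℂ) * signC (∏ j ∈ B ∆ C, extSign (t+1) s j) *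
          signC (qu ε B B) * signC (qu ε B C)) := by
    rw [step1]
    refine Finset.sum_congr rfl fun A hA => ?_
    refine Finset.sum_congr rfl fun B hB => ?_
    refine Finset.sum_congr rfl fun C hC => ?_
    rw [Finset.sum_congr rfl (fun E hE => step2 A hA B hB C hC E hE), step3 A hA B hB C hC]
  -- Step 4: sum over A
  have step4 : (∑ A ∈ (range (t+1)).powerset, ∑ B ∈ (range (t+1)).powerset,
        ∑ C ∈ (range (t+1)).powerset,
        signC (qu ε A (B ∆ C)) *
        ((2:ℂ)^(t+1) * K * (d:ℂ) * signC (∏ j ∈ B ∆ C, extSign (t+1) s j) *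
          signC (qu ε B B) * signC (qu ε B C)))
      = ∑ B ∈ (range (t+1)).powerset, ∑ C ∈ (range (t+1)).powerset,
        (if (∀ i ∈ range (t+1), (∏ j ∈ B ∆ C, if i < j then ε i j else 1) = (1:ℤˣ))
          then (2:ℂ)^(t+1) else 0) *
        ((2:ℂ)^(t+1) * K * (d:ℂ) * signC (∏ j ∈ B ∆ C, extSign (t+1) s j) *
          signC (qu ε B B) * signC (qu ε B C)) := by
    rw [Finset.sum_comm]
    refine Finset.sum_congr rfl fun B _ => ?_
    rw [Finset.sum_comm]
    refine Finset.sum_congr rfl fun C _ => ?_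
    rw [← Finset.sum_mul, sum_signC_qu ε (B ∆ C)]
  -- Step 5: reindex the C-sum by T = B ∆ C
  have step5 : ∀ B ∈ (range (t+1)).powerset,
      (∑ C ∈ (range (t+1)).powerset,
        (if (∀ i ∈ range (t+1), (∏ j ∈ B ∆ C, if i < j then ε i j else 1) = (1:ℤˣ))
          then (2:ℂ)^(t+1) else 0) *
        ((2:ℂ)^(t+1) * K * (d:ℂ) * signC (∏ j ∈ B ∆ C, extSign (t+1) s j) *
          signC (qu ε B B) * signC (qu ε B C)))
      = ∑ T ∈ (range (t+1)).powerset,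
        (if (∀ i ∈ range (t+1), (∏ j ∈ T, if i < j then ε i j else 1) = (1:ℤˣ))
          then (2:ℂ)^(t+1) else 0) *
        ((2:ℂ)^(t+1) * K * (d:ℂ) * signC (∏ j ∈ T, extSign (t+1) s j) *
          signC (qu ε B T)) := by
    intro B hB
    refine Finset.sum_nbij' (fun C => B ∆ C) (fun T => B ∆ T) ?_ ?_ ?_ ?_ ?_
    · intro C hC
      exact Finset.mem_powerset.mpr (symmDiff_subset (Finset.mem_powerset.mp hB)
        (Finset.mem_powerset.mp hC))
    · intro T hT
      exact Finset.mem_powerset.mpr (symmDiff_subset (Finset.mem_powerset.mp hB)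
        (Finset.mem_powerset.mp hT))
    · intro C _; exact symmDiff_symmDiff_cancel_left B C
    · intro T _; exact symmDiff_symmDiff_cancel_left B T
    · intro C _
      rw [qu_symmDiff_right ε B B C, signC_mul]
      ring
  -- Step 6: under the condition the `qu` factor is trivial
  have step6 : ∀ B ∈ (range (t+1)).powerset, ∀ T ∈ (range (t+1)).powerset,
      (if (∀ i ∈ range (t+1), (∏ j ∈ T, if i < j then ε i j else 1) = (1:ℤˣ))
        then (2:ℂ)^(t+1) else 0) *
      ((2:ℂ)^(t+1) * K * (d:ℂ) * signC (∏ j ∈ T, extSign (t+1) s j) * signC (qu ε B T))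
      = if (∀ i ∈ range (t+1), (∏ j ∈ T, if i < j then ε i j else 1) = (1:ℤˣ))
        then ((2:ℂ)^(t+1) * ((2:ℂ)^(t+1) * K * (d:ℂ))) * signC (∏ j ∈ T, extSign (t+1) s j)
        else 0 := by
    intro B hB T hT
    by_cases hc : ∀ i ∈ range (t+1), (∏ j ∈ T, if i < j then ε i j else 1) = (1:ℤˣ)
    · rw [if_pos hc, if_pos hc]
      have h1 : qu ε B T = 1 :=
        Finset.prod_eq_one fun i hi => hc i (Finset.mem_powerset.mp hB hi)
      rw [h1, signC_one]
      ring
    · rw [if_neg hc, if_neg hc, zero_mul]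
  -- assemble
  rw [step123, step4]
  rw [Finset.sum_congr rfl (fun B hB => (step5 B hB).trans
    (Finset.sum_congr rfl (fun T hT => step6 B hB T hT)))]
  rw [Finset.sum_const, Finset.card_powerset, Finset.card_range, nsmul_eq_mul]
  rw [← Finset.sum_filter, ← Finset.mul_sum, final_sum ε hεdiag s]
  -- final arithmetic
  have hcast : ((Nat.card (EhatRev (t+1) ε) : ℂ)) *
      ((Nat.card (LinearMap.BilinForm.orthogonal Bform (Wsp (t+1) ε)) : ℕ) : ℂ)
      = (2:ℂ)^(t+1) := by
    have := card_Ehat_mul_card_orth (τ := t+1) ε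
    exact_mod_cast congrArg (Nat.cast (R := ℂ)) this
  have hEpos : ((Nat.card (EhatRev (t+1) ε) : ℂ)) ≠ 0 := by
    have : 0 < Nat.card (EhatRev (t+1) ε) := Nat.card_pos
    exact_mod_cast Nat.pos_iff_ne_zero.mp this
  have h2ne : ((2:ℂ)^(t+1)) ≠ 0 := pow_ne_zero _ two_ne_zero
  by_cases hs : s ∈ EhatRev (t+1) ε
  · rw [if_pos hs, if_pos hs, hK]
    rw [show ((2:ℂ)⁻¹^(t+1)) = ((2:ℂ)^(t+1))⁻¹ by rw [inv_pow]]
    push_cast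
    refine eq_inv_of_mul_eq_one_left ?_
    calc (2:ℂ)^(t+1) *
          ((2:ℂ)^(t+1) * ((2:ℂ)^(t+1) * ((↑d)⁻¹ * ((2:ℂ)^(t+1))⁻¹ ^ 4) * ↑d) *
            ((Nat.card (LinearMap.BilinForm.orthogonal Bform (Wsp (t+1) ε)) : ℕ) : ℂ)) *
          ((Nat.card (EhatRev (t+1) ε) : ℕ) : ℂ)
        = (((Nat.card (EhatRev (t+1) ε) : ℕ) : ℂ) *
            ((Nat.card (LinearMap.BilinForm.orthogonal Bform (Wsp (t+1) ε)) : ℕ) : ℂ)) *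
          (((2:ℂ)^(t+1))^3 * (((2:ℂ)^(t+1))⁻¹)^4) * ((d:ℂ) * (↑d)⁻¹) := by ring
      _ = ((2:ℂ)^(t+1) * ((2:ℂ)^(t+1))^3) * ((((2:ℂ)^(t+1))^4)⁻¹) := by
          rw [hcast, mul_inv_cancel₀ hdC, mul_one, ← inv_pow]
          ring_nf
          rw [one_div]
      _ = (((2:ℂ)^(t+1))^4) * ((((2:ℂ)^(t+1))^4)⁻¹) := by ring
      _ = 1 := mul_inv_cancel₀ (pow_ne_zero _ h2ne)
  · rw [if_neg hs, if_neg hs, mul_zero, mul_zero]
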